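/- Let F be a binary cluster family on a finite set X, i.e., a finite family of nonempty subsets of X such that X ∈ F, {x} ∈ F for every x ∈ X, any two members of F are disjoint or one contains the other, and every member C of F with at least two elements is the union of two disjoint nonempty members of F. Let Y be a nonempty subset of X and define the restriction F|Y := {C ∩ Y : C ∈ F, C ∩ Y ≠ ∅}. Then F|Y is a binary cluster family on Y. -/
import Mathlib


/-- A binary cluster family on ground set `X`: the family of clusters (leaf sets of
subtrees) of a rooted binary phylogenetic tree with leaf set `X`. -/
def IsBinaryClusterFamily {α : Type*} [DecidableEq α]
    (X : Finset α) (F : Finset (Finset α)) : Prop :=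
  (∀ C ∈ F, C.Nonempty ∧ C ⊆ X) ∧
  X ∈ F ∧
  (∀ x ∈ X, ({x} : Finset α) ∈ F) ∧
  (∀ C ∈ F, ∀ D ∈ F, Disjoint C D ∨ C ⊆ D ∨ D ⊆ C) ∧
  (∀ C ∈ F, 2 ≤ C.card →
    ∃ C₁ ∈ F, ∃ C₂ ∈ F, C₁.Nonempty ∧ C₂.Nonempty ∧ Disjoint C₁ C₂ ∧ C = C₁ ∪ C₂)

/-- The restriction `F|Y = {C ∩ Y : C ∈ F, C ∩ Y ≠ ∅}` of a cluster family to a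
leaf subset `Y` (the cluster family of the induced subtree). -/
def Restrict {α : Type*} [DecidableEq α] (F : Finset (Finset α)) (Y : Finset α) :
    Finset (Finset α) :=
  (F.image (· ∩ Y)).filter Finset.Nonempty

lemma mem_restrict {α : Type*} [DecidableEq α] {F : Finset (Finset α)} {Y S : Finset α} :
    S ∈ Restrict F Y ↔ (∃ C ∈ F, C ∩ Y = S) ∧ S.Nonempty := by
  simp [Restrict, Finset.mem_filter, Finset.mem_image]

lemma split_lemma {α : Type*} [DecidableEq α] {X Y : Finset α} {F : Finset (Finset α)}
    (hF : IsBinaryClusterFamily X F) :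
    ∀ n (C : Finset α), C.card ≤ n → C ∈ F → 2 ≤ (C ∩ Y).card →
    ∃ C₁ ∈ F, ∃ C₂ ∈ F, (C₁ ∩ Y).Nonempty ∧ (C₂ ∩ Y).Nonempty ∧
      Disjoint (C₁ ∩ Y) (C₂ ∩ Y) ∧ C ∩ Y = (C₁ ∩ Y) ∪ (C₂ ∩ Y) := by
  intro n
  induction n with
  | zero =>
    intro C hc hC h2
    have : (C ∩ Y).card ≤ C.card := Finset.card_le_card Finset.inter_subset_left
    omega
  | succ n ih =>
    intro C hc hC h2
    have hC2 : 2 ≤ C.card :=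
      le_trans h2 (Finset.card_le_card Finset.inter_subset_left)
    obtain ⟨C₁, h1, C₂, h2', hn1, hn2, hd, heq⟩ := hF.2.2.2.2 C hC hC2
    have hcard : C.card = C₁.card + C₂.card := by
      rw [heq]; exact Finset.card_union_of_disjoint hd
    have hdist : C ∩ Y = (C₁ ∩ Y) ∪ (C₂ ∩ Y) := by
      rw [heq, Finset.union_inter_distrib_right]
    by_cases k1 : (C₁ ∩ Y).Nonempty
    · by_cases k2 : (C₂ ∩ Y).Nonempty
      · exact ⟨C₁, h1, C₂, h2', k1, k2,
          hd.mono Finset.inter_subset_left Finset.inter_subset_left, hdist⟩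
      · have hCY : C ∩ Y = C₁ ∩ Y := by
          rw [hdist, Finset.not_nonempty_iff_eq_empty.mp k2, Finset.union_empty]
        have : C₁.card ≤ n := by
          have := hn2.card_pos; omega
        obtain ⟨D₁, hd1, D₂, hd2, a1, a2, a3, a4⟩ :=
          ih C₁ this h1 (by rwa [← hCY])
        exact ⟨D₁, hd1, D₂, hd2, a1, a2, a3, by rw [hCY, a4]⟩
    · have hCY : C ∩ Y = C₂ ∩ Y := by
        rw [hdist, Finset.not_nonempty_iff_eq_empty.mp k1, Finset.empty_union]
      have : C₂.card ≤ n := by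
        have := hn1.card_pos; omega
      obtain ⟨D₁, hd1, D₂, hd2, a1, a2, a3, a4⟩ :=
        ih C₂ this h2' (by rwa [← hCY])
      exact ⟨D₁, hd1, D₂, hd2, a1, a2, a3, by rw [hCY, a4]⟩

theorem restrict_isBinaryClusterFamily {α : Type*} [DecidableEq α]
    (X : Finset α) (F : Finset (Finset α)) (hF : IsBinaryClusterFamily X F)
    (Y : Finset α) (hYX : Y ⊆ X) (hY : Y.Nonempty) :
    IsBinaryClusterFamily Y (Restrict F Y) := by
  obtain ⟨hne, hX, hsing, hlam, hsplit⟩ := hF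
  refine ⟨?_, ?_, ?_, ?_, ?_⟩
  · intro S hS
    obtain ⟨⟨C, _, rfl⟩, hSne⟩ := mem_restrict.mp hS
    exact ⟨hSne, Finset.inter_subset_right⟩
  · exact mem_restrict.mpr ⟨⟨X, hX, Finset.inter_eq_right.mpr hYX⟩, hY⟩
  · intro x hx
    exact mem_restrict.mpr ⟨⟨{x}, hsing x (hYX hx),
      Finset.inter_eq_left.mpr (Finset.singleton_subset_iff.mpr hx)⟩,
      Finset.singleton_nonempty x⟩
  · intro S hS T hT
    obtain ⟨⟨C, hC, rfl⟩, _⟩ := mem_restrict.mp hS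
    obtain ⟨⟨D, hD, rfl⟩, _⟩ := mem_restrict.mp hT
    rcases hlam C hC D hD with h | h | h
    · exact Or.inl (h.mono Finset.inter_subset_left Finset.inter_subset_left)
    · exact Or.inr (Or.inl (Finset.inter_subset_inter_right h))
    · exact Or.inr (Or.inr (Finset.inter_subset_inter_right h))
  · intro S hS h2
    obtain ⟨⟨C, hC, rfl⟩, _⟩ := mem_restrict.mp hS
    obtain ⟨C₁, h1, C₂, h2', a1, a2, a3, a4⟩ :=
      split_lemma ⟨hne, hX, hsing, hlam, hsplit⟩ C.card C le_rfl hC h2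
    exact ⟨C₁ ∩ Y, mem_restrict.mpr ⟨⟨C₁, h1, rfl⟩, a1⟩,
      C₂ ∩ Y, mem_restrict.mpr ⟨⟨C₂, h2', rfl⟩, a2⟩, a1, a2, a3, a4⟩
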